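/- Let A be a commutative ring with unity and Φ ∈ A^{n×(n-1)}. For p ∈ {1,...,n} let Δ_{p;·}(Φ) denote the determinant of the (n-1)×(n-1) matrix obtained by deleting row p from Φ. Then Φ is left invertible over A if and only if there exist c_1,...,c_n ∈ A with Σ_{p=1}^n c_p Δ_{p;·}(Φ) = 1. -/

import Mathlib

open Matrix

/-- Corollary 2.3: Φ ∈ A^{n×(n-1)} is left invertible over the commutative ring A iff the
column of its maximal minors Δ_{p;·}(Φ) is left invertible over A. -/
theorem stmt4 {A : Type*} [CommRing A] {n : ℕ}
    (Φ : Matrix (Fin (n + 1)) (Fin n) A) :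
    (∃ Ψ : Matrix (Fin n) (Fin (n + 1)) A, Ψ * Φ = 1) ↔
    (∃ c : Fin (n + 1) → A,
      ∑ p : Fin (n + 1), c p * (Φ.submatrix p.succAbove id).det = 1) := by
  constructor
  · rintro ⟨Ψ, hΨ⟩
    set e : Fin n ⊕ Fin 1 ≃ Fin (n + 1) := finSumFinEquiv with he
    set u : Fin (n + 1) → Matrix (Fin (n + 1)) (Fin 1) A :=
      fun p => Matrix.of fun i _ => if i = p then 1 else 0 with hu
    set v : Fin (n + 1) → Matrix (Fin 1) (Fin (n + 1)) A :=
      fun p => Matrix.of fun _ j => if j = p then 1 else 0 with hv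
    set B : Fin (n + 1) → Matrix (Fin (n + 1)) (Fin (n + 1)) A :=
      fun p => (fromCols Φ (u p)).submatrix id e.symm with hB
    set C : Fin (n + 1) → Matrix (Fin (n + 1)) (Fin (n + 1)) A :=
      fun p => (fromRows Ψ (v p)).submatrix e.symm id with hC
    have key : ∀ p, (C p).det * (B p).det = 1 - (Φ * Ψ) p p := by
      intro p
      have h1 : C p * B p =
          ((fromRows Ψ (v p)) * (fromCols Φ (u p))).submatrix e.symm e.symm := by
        have := submatrix_mul_equiv (fromRows Ψ (v p)) (fromCols Φ (u p))
          (e.symm : Fin (n + 1) → Fin n ⊕ Fin 1) (Equiv.refl (Fin (n + 1)))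
          (e.symm : Fin (n + 1) → Fin n ⊕ Fin 1)
        simpa using this
      have h2 : ((C p) * (B p)).det = ((fromRows Ψ (v p)) * (fromCols Φ (u p))).det := by
        rw [h1, det_submatrix_equiv_self]
      have h3 : (fromRows Ψ (v p)) * (fromCols Φ (u p)) =
          fromBlocks 1 (Ψ * u p) (v p * Φ) (v p * u p) := by
        rw [fromRows_mul_fromCols, hΨ]
      have h4 : (fromBlocks (1 : Matrix (Fin n) (Fin n) A)
          (Ψ * u p) (v p * Φ) (v p * u p)).det = 1 - (Φ * Ψ) p p := by
        rw [det_fromBlocks_one₁₁, Matrix.det_fin_one]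
        have hvu : (v p * u p) 0 0 = 1 := by
          simp [hv, hu, mul_apply]
        have hvΦ : ∀ k, (v p * Φ) 0 k = Φ p k := by
          intro k; simp [hv, mul_apply]
        have hΨu : ∀ k, (Ψ * u p) k 0 = Ψ k p := by
          intro k; simp [hu, mul_apply]
        have hmm : (v p * Φ * (Ψ * u p)) 0 0 = (Φ * Ψ) p p := by
          rw [mul_apply, mul_apply]
          exact Finset.sum_congr rfl fun k _ => by rw [hvΦ, hΨu]
        rw [Matrix.sub_apply, hvu, hmm]
      rw [← det_mul, h2, h3, h4]
    -- compute det (B p) via Laplace expansion along the last column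
    have hBlast : ∀ p i, B p i (Fin.last n) = if i = p then 1 else 0 := by
      intro p i
      simp only [hB, submatrix_apply, id_eq, he, finSumFinEquiv_symm_last]
      rfl
    have hBsub : ∀ p, (B p).submatrix p.succAbove (Fin.last n).succAbove =
        Φ.submatrix p.succAbove id := by
      intro p
      ext i k
      simp only [Fin.succAbove_last, submatrix_apply, hB, id_eq]
      have : e.symm (Fin.castSucc k) = Sum.inl k := by
        rw [he]
        exact finSumFinEquiv_symm_apply_castAdd k
      rw [this]
      rfl
    have hdetB : ∀ p, (B p).det =
        (-1) ^ ((p : ℕ) + n) * (Φ.submatrix p.succAbove id).det := by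
      intro p
      rw [det_succ_column (B p) (Fin.last n)]
      rw [Finset.sum_eq_single p]
      · rw [hBlast, if_pos rfl, hBsub]
        simp [Fin.val_last]
      · intro q _ hq
        rw [hBlast, if_neg hq]
        ring
      · intro h; exact absurd (Finset.mem_univ p) h
    refine ⟨fun p => (-1) ^ ((p : ℕ) + n) * (C p).det, ?_⟩
    have step : ∀ p : Fin (n + 1), (-1) ^ ((p : ℕ) + n) * (C p).det *
        (Φ.submatrix p.succAbove id).det = 1 - (Φ * Ψ) p p := by
      intro p
      have := key p
      rw [hdetB p] at this
      rw [← this]; ring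
    rw [Finset.sum_congr rfl fun p _ => step p]
    rw [Finset.sum_sub_distrib]
    have htr : ∑ p : Fin (n + 1), (Φ * Ψ) p p = Matrix.trace (Φ * Ψ) := rfl
    rw [htr, trace_mul_comm, hΨ, trace_one]
    simp
  · rintro ⟨c, hc⟩
    have hsel : ∀ p : Fin (n + 1),
        (1 : Matrix (Fin (n + 1)) (Fin (n + 1)) A).submatrix p.succAbove id * Φ =
          Φ.submatrix p.succAbove id := by
      intro p
      ext i j
      rw [mul_apply]
      simp [Matrix.one_apply, Finset.sum_ite_eq]
    refine ⟨∑ p : Fin (n + 1), c p •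
      ((Φ.submatrix p.succAbove id).adjugate *
        (1 : Matrix (Fin (n + 1)) (Fin (n + 1)) A).submatrix p.succAbove id), ?_⟩
    rw [Matrix.sum_mul]
    have : ∀ p : Fin (n + 1), (c p •
        ((Φ.submatrix p.succAbove id).adjugate *
          (1 : Matrix (Fin (n + 1)) (Fin (n + 1)) A).submatrix p.succAbove id)) * Φ =
        (c p * (Φ.submatrix p.succAbove id).det) • (1 : Matrix (Fin n) (Fin n) A) := by
      intro p
      rw [Matrix.smul_mul, Matrix.mul_assoc, hsel, adjugate_mul, smul_smul]
    rw [Finset.sum_congr rfl fun p _ => this p, ← Finset.sum_smul, hc, one_smul]
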